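/- For every n ≥ 1 and every x ∈ [0,1], the second central moment of the modified Durrmeyer operator satisfies D_n^{M,1}((t − x)^2; x) = 2(3a_1(n) + 4a_0(n) − 11a_1(n)x + 14x^2 a_0(n) + 11a_1(n)x^2 − 14a_0(n)x)/((n+2)(n+3)) + 2(1−x)x(2a_0(n) + a_1(n)) n/((n+2)(n+3)). -/

import Mathlib

open Filter Topology

lemma prod_fact (a b : ℕ) :
    a.factorial * ∏ j ∈ Finset.range (b+1), (a+1+j) = (a+b+1).factorial := by
  induction b with
  | zero => simp [Nat.factorial_succ, mul_comm]
  | succ b ih =>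
      rw [Finset.prod_range_succ, ← mul_assoc, ih]
      have : a + (b+1) + 1 = (a + b + 1) + 1 := by ring
      rw [this, Nat.factorial_succ (a+b+1)]
      ring

lemma beta_nat (a b : ℕ) : ∫ t in (0:ℝ)..1, t^a * (1-t)^b
    = (a.factorial * b.factorial : ℝ) / (a+b+1).factorial := by
  have h := Complex.betaIntegral_eval_nat_add_one_right
    (u := (a:ℂ)+1) (by simp; positivity) b
  rw [Complex.betaIntegral] at h
  simp only [add_sub_cancel_right, Complex.cpow_natCast] at h
  have hl : (∫ x : ℝ in (0:ℝ)..1, (x:ℂ)^a * (1-(x:ℂ))^b)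
      = ((∫ t in (0:ℝ)..1, t^a * (1-t)^b : ℝ) : ℂ) := by
    rw [← intervalIntegral.integral_ofReal]
    push_cast
    rfl
  rw [hl] at h
  have hp : (∏ j ∈ Finset.range (b+1), ((a:ℂ)+1+j))
      = ((∏ j ∈ Finset.range (b+1), (a+1+j) : ℕ) : ℂ) := by push_cast; ring_nf
  rw [hp] at h
  have hpos : (0:ℝ) < ((∏ j ∈ Finset.range (b+1), (a+1+j) : ℕ) : ℝ) := by
    positivity
  have key : (a.factorial : ℝ) * (∏ j ∈ Finset.range (b+1), (a+1+j) : ℕ) = ((a+b+1).factorial : ℝ) := by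
    exact_mod_cast congrArg (Nat.cast : ℕ → ℝ) (prod_fact a b)
  have h2 : ((∫ t in (0:ℝ)..1, t^a * (1-t)^b : ℝ) : ℂ)
      = (((a.factorial * b.factorial : ℝ) / (a+b+1).factorial : ℝ) : ℂ) := by
    rw [h]
    have hPne : ((∏ j ∈ Finset.range (b+1), (a+1+j) : ℕ) : ℝ) ≠ 0 := hpos.ne'
    have hfne : ((a+b+1).factorial : ℝ) ≠ 0 := by positivity
    push_cast
    rw [div_eq_div_iff (by exact_mod_cast hPne) (by exact_mod_cast hfne)]
    have := congrArg (Complex.ofReal) key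
    push_cast at this
    linear_combination (-(b.factorial : ℂ)) * this
  exact_mod_cast h2

/-- Bernstein basis polynomial `p_{n,k}(x)`, zero when `k < 0` or `k > n`. -/
noncomputable def bern (n : ℕ) (k : ℤ) (x : ℝ) : ℝ :=
  if 0 ≤ k ∧ k ≤ (n : ℤ) then (n.choose k.toNat : ℝ) * x ^ k.toNat * (1 - x) ^ (n - k.toNat)
  else 0

lemma bern_nat (n k : ℕ) (hk : k ≤ n) (t : ℝ) :
    bern n (k:ℤ) t = (n.choose k : ℝ) * t^k * (1-t)^(n-k) := by
  rw [bern, if_pos ⟨Int.natCast_nonneg k, by exact_mod_cast hk⟩]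
  simp

set_option maxHeartbeats 2000000 in
lemma key_int (n k : ℕ) (hk : k ≤ n) (x : ℝ) :
    ∫ t in (0:ℝ)..1, bern n (k:ℤ) t * (t - x)^2
      = ((k:ℝ)+1)*((k:ℝ)+2)/(((n:ℝ)+1)*((n:ℝ)+2)*((n:ℝ)+3))
        - 2*x*((k:ℝ)+1)/(((n:ℝ)+1)*((n:ℝ)+2)) + x^2/((n:ℝ)+1) := by
  have e : ∀ t : ℝ, bern n (k:ℤ) t * (t-x)^2
      = (n.choose k : ℝ) * (t^(k+2)*(1-t)^(n-k))
        - 2*x*(n.choose k : ℝ) * (t^(k+1)*(1-t)^(n-k))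
        + x^2*(n.choose k : ℝ) * (t^k*(1-t)^(n-k)) := by
    intro t; rw [bern_nat n k hk]; ring
  simp only [e]
  have i1 : IntervalIntegrable (fun t : ℝ => (n.choose k : ℝ) * (t^(k+2)*(1-t)^(n-k)))
      MeasureTheory.volume 0 1 := (by fun_prop : Continuous _).intervalIntegrable _ _
  have i2 : IntervalIntegrable (fun t : ℝ => 2*x*(n.choose k : ℝ) * (t^(k+1)*(1-t)^(n-k)))
      MeasureTheory.volume 0 1 := (by fun_prop : Continuous _).intervalIntegrable _ _
  have i3 : IntervalIntegrable (fun t : ℝ => x^2*(n.choose k : ℝ) * (t^k*(1-t)^(n-k)))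
      MeasureTheory.volume 0 1 := (by fun_prop : Continuous _).intervalIntegrable _ _
  rw [intervalIntegral.integral_add (i1.sub i2) i3, intervalIntegral.integral_sub i1 i2,
    intervalIntegral.integral_const_mul, intervalIntegral.integral_const_mul,
    intervalIntegral.integral_const_mul, beta_nat, beta_nat, beta_nat]
  have d3 : k+2+(n-k)+1 = n+3 := by omega
  have d2 : k+1+(n-k)+1 = n+2 := by omega
  have d1 : k+(n-k)+1 = n+1 := by omega
  rw [d3, d2, d1]
  have f2 : ((k+2).factorial : ℝ) = ((k:ℝ)+2)*(((k:ℝ)+1)*(k.factorial:ℝ)) := by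
    have : (k+2).factorial = (k+2)*((k+1)*k.factorial) := rfl
    rw [this]; push_cast; ring
  have f1 : ((k+1).factorial : ℝ) = ((k:ℝ)+1)*(k.factorial:ℝ) := by
    have : (k+1).factorial = (k+1)*k.factorial := rfl
    rw [this]; push_cast; ring
  have g3 : ((n+3).factorial : ℝ) = ((n:ℝ)+3)*(((n:ℝ)+2)*(((n:ℝ)+1)*(n.factorial:ℝ))) := by
    have : (n+3).factorial = (n+3)*((n+2)*((n+1)*n.factorial)) := rfl
    rw [this]; push_cast; ring
  have g2 : ((n+2).factorial : ℝ) = ((n:ℝ)+2)*(((n:ℝ)+1)*(n.factorial:ℝ)) := by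
    have : (n+2).factorial = (n+2)*((n+1)*n.factorial) := rfl
    rw [this]; push_cast; ring
  have g1 : ((n+1).factorial : ℝ) = ((n:ℝ)+1)*(n.factorial:ℝ) := by
    have : (n+1).factorial = (n+1)*n.factorial := rfl
    rw [this]; push_cast; ring
  rw [f2, f1, g3, g2, g1]
  have hC : (n.choose k : ℝ) * ((k.factorial:ℝ) * ((n-k).factorial:ℝ)) = (n.factorial:ℝ) := by
    exact_mod_cast congrArg (Nat.cast : ℕ → ℝ)
      (by rw [← mul_assoc]; exact Nat.choose_mul_factorial_mul_factorial hk)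
  have hK : (0:ℝ) < (k.factorial:ℝ) := by positivity
  have hG : (0:ℝ) < ((n-k).factorial:ℝ) := by positivity
  have hN : (0:ℝ) < (n.factorial:ℝ) := by positivity
  have hn1 : (0:ℝ) < (n:ℝ)+1 := by positivity
  have hn2 : (0:ℝ) < (n:ℝ)+2 := by positivity
  have hn3 : (0:ℝ) < (n:ℝ)+3 := by positivity
  have hCval : (n.choose k : ℝ) = (n.factorial:ℝ) / ((k.factorial:ℝ) * ((n-k).factorial:ℝ)) := by
    rw [eq_div_iff (by positivity)]; exact hC
  rw [hCval]
  field_simp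

lemma bern_eq_eval (m j : ℕ) (x : ℝ) :
    bern m (j:ℤ) x = (bernsteinPolynomial ℝ m j).eval x := by
  by_cases hj : j ≤ m
  · rw [bern_nat m j hj, bernsteinPolynomial]
    simp only [Polynomial.eval_mul, Polynomial.eval_pow, Polynomial.eval_sub,
      Polynomial.eval_one, Polynomial.eval_X, Polynomial.eval_smul, nsmul_eq_mul,
      Polynomial.eval_natCast]
  · rw [bernsteinPolynomial.eq_zero_of_lt ℝ (by omega), bern]
    rw [if_neg (by omega)]
    simp

lemma sum_bern (m : ℕ) (x : ℝ) :
    ∑ j ∈ Finset.range (m+1), bern m (j:ℤ) x = 1 := by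
  simp only [bern_eq_eval]
  rw [← Polynomial.eval_finset_sum, bernsteinPolynomial.sum]
  simp

lemma sum_bern_smul (m : ℕ) (x : ℝ) :
    ∑ j ∈ Finset.range (m+1), (j:ℝ) * bern m (j:ℤ) x = (m:ℝ) * x := by
  simp only [bern_eq_eval]
  have := congrArg (Polynomial.eval x) (bernsteinPolynomial.sum_smul (R := ℝ) m)
  rw [Polynomial.eval_finset_sum] at this
  simpa [nsmul_eq_mul] using this

lemma sum_bern_mul_smul (m : ℕ) (x : ℝ) :
    ∑ j ∈ Finset.range (m+1), ((j:ℝ) * ((j:ℝ) - 1)) * bern m (j:ℤ) x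
      = (m:ℝ) * ((m:ℝ) - 1) * x^2 := by
  simp only [bern_eq_eval]
  have := congrArg (Polynomial.eval x) (bernsteinPolynomial.sum_mul_smul (R := ℝ) m)
  rw [Polynomial.eval_finset_sum] at this
  simp only [nsmul_eq_mul, Polynomial.eval_mul, Polynomial.eval_natCast, Polynomial.eval_pow,
    Polynomial.eval_X] at this
  have hc : ∀ j : ℕ, ((j*(j-1) : ℕ) : ℝ) = (j:ℝ)*((j:ℝ)-1) := by
    intro j
    cases j with
    | zero => simp
    | succ i => push_cast [Nat.succ_sub_one]; ring
  rw [show ((m:ℝ) * ((m:ℝ) - 1) * x^2) = ((m*(m-1) : ℕ) : ℝ) * x^2 by rw [hc]]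
  rw [← this]
  exact Finset.sum_congr rfl fun j _ => by rw [← hc j]

lemma moment_sum (m : ℕ) (x α β γ : ℝ) :
    ∑ j ∈ Finset.range (m+1), (α*(j:ℝ)^2 + β*(j:ℝ) + γ) * bern m (j:ℤ) x
      = α*((m:ℝ)*((m:ℝ)-1)*x^2 + (m:ℝ)*x) + β*((m:ℝ)*x) + γ := by
  have h : ∀ j : ℕ, (α*(j:ℝ)^2 + β*(j:ℝ) + γ) * bern m (j:ℤ) x
      = α * (((j:ℝ)*((j:ℝ)-1)) * bern m (j:ℤ) x) + (α+β) * ((j:ℝ) * bern m (j:ℤ) x)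
        + γ * bern m (j:ℤ) x := by
    intro j; ring
  simp only [h]
  rw [Finset.sum_add_distrib, Finset.sum_add_distrib, ← Finset.mul_sum, ← Finset.mul_sum,
    ← Finset.mul_sum, sum_bern, sum_bern_smul, sum_bern_mul_smul]
  ring

lemma sum_shift0 (m : ℕ) (x α β γ : ℝ) :
    ∑ k ∈ Finset.range (m+2), (α*(k:ℝ)^2 + β*(k:ℝ) + γ) * bern m (k:ℤ) x
      = α*((m:ℝ)*((m:ℝ)-1)*x^2 + (m:ℝ)*x) + β*((m:ℝ)*x) + γ := by
  have : m + 2 = (m+1) + 1 := rfl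
  rw [this, Finset.sum_range_succ]
  have hz : bern m ((m+1 : ℕ):ℤ) x = 0 := by
    rw [bern, if_neg (by omega)]
  rw [hz, mul_zero, add_zero, moment_sum]

lemma sum_shift1 (m : ℕ) (x α β γ : ℝ) :
    ∑ k ∈ Finset.range (m+2), (α*(k:ℝ)^2 + β*(k:ℝ) + γ) * bern m ((k:ℤ)-1) x
      = α*((m:ℝ)*((m:ℝ)-1)*x^2 + (m:ℝ)*x) + (2*α+β)*((m:ℝ)*x) + (α+β+γ) := by
  rw [Finset.sum_range_succ']
  have hz : bern m (((0:ℕ):ℤ)-1) x = 0 := by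
    rw [bern, if_neg (by omega)]
  rw [hz, mul_zero, add_zero]
  have h : ∀ j : ℕ, (α*((j+1 : ℕ):ℝ)^2 + β*((j+1 : ℕ):ℝ) + γ) * bern m (((j+1 : ℕ):ℤ)-1) x
      = (α*(j:ℝ)^2 + (2*α+β)*(j:ℝ) + (α+β+γ)) * bern m (j:ℤ) x := by
    intro j
    have : ((j+1 : ℕ):ℤ) - 1 = (j:ℤ) := by push_cast; ring
    rw [this]; push_cast; ring
  rw [Finset.sum_congr rfl (fun j _ => h j), moment_sum]

/-- Modified Bernstein basis `p_{n,k}^{M,1}(x)` of Khosravian-Arab et al. -/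
noncomputable def pM1 (a0 a1 : ℕ → ℝ) (n : ℕ) (k : ℤ) (x : ℝ) : ℝ :=
  (a1 n * x + a0 n) * bern (n - 1) k x + (a1 n * (1 - x) + a0 n) * bern (n - 1) (k - 1) x

/-- First-order modified Durrmeyer operator `D_n^{M,1}(f;x)`. -/
noncomputable def DM1 (a0 a1 : ℕ → ℝ) (n : ℕ) (f : ℝ → ℝ) (x : ℝ) : ℝ :=
  ((n : ℝ) + 1) * ∑ k ∈ Finset.range (n + 1),
    pM1 a0 a1 n k x * ∫ t in (0:ℝ)..1, bern n k t * f t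

set_option maxHeartbeats 4000000 in
theorem DM1_central_moment_two (a0 a1 : ℕ → ℝ) (n : ℕ) (hn : 1 ≤ n)
    (x : ℝ) (hx : x ∈ Set.Icc (0:ℝ) 1) :
    DM1 a0 a1 n (fun t => (t - x) ^ 2) x
      = 2 * (3 * a1 n + 4 * a0 n - 11 * a1 n * x + 14 * x ^ 2 * a0 n + 11 * a1 n * x ^ 2
            - 14 * a0 n * x) / (((n : ℝ) + 2) * ((n : ℝ) + 3))
        + 2 * (1 - x) * x * (2 * a0 n + a1 n) * (n : ℝ) / (((n : ℝ) + 2) * ((n : ℝ) + 3)) := by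
  obtain ⟨m, rfl⟩ : ∃ m, n = m + 1 := ⟨n - 1, by omega⟩
  rw [DM1]
  have hkey : ∀ k ∈ Finset.range (m+1+1),
      pM1 a0 a1 (m+1) (k:ℤ) x * ∫ t in (0:ℝ)..1, bern (m+1) (k:ℤ) t * ((t - x)^2)
        = pM1 a0 a1 (m+1) (k:ℤ) x *
          (((k:ℝ)+1)*((k:ℝ)+2)/((((m:ℝ)+1)+1)*((((m:ℝ)+1)+2))*((((m:ℝ)+1)+3)))
            - 2*x*((k:ℝ)+1)/((((m:ℝ)+1)+1)*(((m:ℝ)+1)+2)) + x^2/(((m:ℝ)+1)+1)) := by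
    intro k hk
    rw [key_int (m+1) k (by simpa using Nat.lt_succ_iff.mp (Finset.mem_range.mp hk))]
    push_cast
    ring_nf
  rw [Finset.sum_congr rfl hkey]
  set A := a1 (m+1) * x + a0 (m+1) with hA
  set B := a1 (m+1) * (1-x) + a0 (m+1) with hB
  set P3 : ℝ := (((m:ℝ)+1)+1)*((((m:ℝ)+1)+2))*((((m:ℝ)+1)+3)) with hP3
  set P2 : ℝ := (((m:ℝ)+1)+1)*(((m:ℝ)+1)+2) with hP2
  set P1 : ℝ := ((m:ℝ)+1)+1 with hP1
  have hsplit : ∀ k ∈ Finset.range (m+1+1),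
      pM1 a0 a1 (m+1) (k:ℤ) x *
        (((k:ℝ)+1)*((k:ℝ)+2)/P3 - 2*x*((k:ℝ)+1)/P2 + x^2/P1)
      = ((A/P3)*(k:ℝ)^2 + (A*3/P3 - A*2*x/P2)*(k:ℝ) + (A*2/P3 - A*2*x/P2 + A*x^2/P1))
          * bern m (k:ℤ) x
        + ((B/P3)*(k:ℝ)^2 + (B*3/P3 - B*2*x/P2)*(k:ℝ) + (B*2/P3 - B*2*x/P2 + B*x^2/P1))
          * bern m ((k:ℤ)-1) x := by
    intro k hk
    rw [pM1, Nat.add_sub_cancel, ← hA, ← hB]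
    ring
  rw [Finset.sum_congr rfl hsplit, Finset.sum_add_distrib]
  have e2 : m + 1 + 1 = m + 2 := rfl
  rw [e2, sum_shift0, sum_shift1]
  have h23 : ((m+1 : ℕ) : ℝ) = (m:ℝ) + 1 := by push_cast; ring
  rw [h23, hA, hB, hP3, hP2, hP1]
  have hm1 : ((m:ℝ)+1+1) ≠ 0 := by positivity
  have hm2 : ((m:ℝ)+1+2) ≠ 0 := by positivity
  have hm3 : ((m:ℝ)+1+3) ≠ 0 := by positivity
  field_simp
  ring
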